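/- Let T₁, …, Tₙ (n ≥ 2) be distinct equilateral triangles inscribed in the unit circle C, let S be the vertex set of ∩ᵢ Tᵢ, and for ε > 0 let Tᵢ^{(1−ε)} denote Tᵢ scaled by factor (1−ε) about the origin. Let P be the convex hull of all vertices of all Tᵢ^{(1−ε)}. Then there is no triangle T with S ⊆ T ⊆ P. -/

import Mathlib

open Metric

/-- An equilateral triangle inscribed in the unit circle of ℝ², given by its vertices. -/
def InscribedEquilateral (p : Fin 3 → EuclideanSpace ℝ (Fin 2)) : Prop :=
  AffineIndependent ℝ p ∧
  (∀ a, dist (p a) (0 : EuclideanSpace ℝ (Fin 2)) = 1) ∧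
  ∀ a b, a ≠ b → dist (p a) (p b) = dist (p 0) (p 1)

section Helpers
open Real


lemma cos_le_half {x : ℝ} (h1 : π/3 ≤ x) (h2 : x ≤ 5*π/3) : Real.cos x ≤ 1/2 := by
  rcases le_total x π with h | h
  · calc Real.cos x ≤ Real.cos (π/3) :=
          Real.cos_le_cos_of_nonneg_of_le_pi (by positivity) h h1
      _ = 1/2 := by exact Real.cos_pi_div_three
  · have : Real.cos x = Real.cos (2*π - x) := by rw [Real.cos_two_pi_sub]
    rw [this]
    calc Real.cos (2*π - x) ≤ Real.cos (π/3) := by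
          apply Real.cos_le_cos_of_nonneg_of_le_pi (by positivity) (by linarith) (by linarith)
      _ = 1/2 := by exact Real.cos_pi_div_three

lemma core_sorted {a b c : ℝ} (ha : 0 ≤ a) (hab : a ≤ b) (hbc : b ≤ c) (hc : c < 2*π) :
    ∃ t, Real.cos (t - a) ≤ 1/2 ∧ Real.cos (t - b) ≤ 1/2 ∧ Real.cos (t - c) ≤ 1/2 := by
  have hpi := Real.pi_pos
  rcases le_or_gt (2*π/3) (b - a) with h1 | h1
  · refine ⟨(a+b)/2, ?_, ?_, ?_⟩
    · exact cos_le_half (by linarith) (by linarith)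
    · rw [show (a+b)/2 - b = -((b-a)/2) by ring, Real.cos_neg]
      exact cos_le_half (by linarith) (by linarith)
    · rw [show (a+b)/2 - c = -(c - (a+b)/2) by ring, Real.cos_neg]
      exact cos_le_half (by linarith) (by linarith)
  rcases le_or_gt (2*π/3) (c - b) with h2 | h2
  · refine ⟨(b+c)/2, ?_, ?_, ?_⟩
    · exact cos_le_half (by linarith) (by linarith)
    · exact cos_le_half (by linarith) (by linarith)
    · rw [show (b+c)/2 - c = -((c-b)/2) by ring, Real.cos_neg]
      exact cos_le_half (by linarith) (by linarith)
  · have h3 : 2*π/3 ≤ 2*π - c + a := by linarith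
    refine ⟨(a+c)/2 + π, ?_, ?_, ?_⟩
    · exact cos_le_half (by linarith) (by linarith)
    · exact cos_le_half (by linarith) (by linarith)
    · exact cos_le_half (by linarith) (by linarith)

lemma core_three (x y z : ℝ) (hx : x ∈ Set.Ico 0 (2*π)) (hy : y ∈ Set.Ico 0 (2*π))
    (hz : z ∈ Set.Ico 0 (2*π)) :
    ∃ t, Real.cos (t - x) ≤ 1/2 ∧ Real.cos (t - y) ≤ 1/2 ∧ Real.cos (t - z) ≤ 1/2 := by
  obtain ⟨hx0, hx2⟩ := hx; obtain ⟨hy0, hy2⟩ := hy; obtain ⟨hz0, hz2⟩ := hz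
  rcases le_total x y with h1 | h1 <;> rcases le_total y z with h2 | h2 <;>
    rcases le_total x z with h3 | h3
  · obtain ⟨t, hA, hB, hC⟩ := core_sorted hx0 h1 h2 hz2; exact ⟨t, hA, hB, hC⟩
  · obtain ⟨t, hA, hB, hC⟩ := core_sorted hx0 h1 h2 hz2; exact ⟨t, hA, hB, hC⟩
  · obtain ⟨t, hA, hB, hC⟩ := core_sorted hx0 h3 h2 hy2; exact ⟨t, hA, hC, hB⟩
  · obtain ⟨t, hA, hB, hC⟩ := core_sorted hz0 h3 h1 hy2; exact ⟨t, hB, hC, hA⟩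
  · obtain ⟨t, hA, hB, hC⟩ := core_sorted hy0 h1 h3 hz2; exact ⟨t, hB, hA, hC⟩
  · obtain ⟨t, hA, hB, hC⟩ := core_sorted hy0 h2 h3 hx2; exact ⟨t, hC, hA, hB⟩
  · obtain ⟨t, hA, hB, hC⟩ := core_sorted hz0 h2 h1 hx2; exact ⟨t, hC, hB, hA⟩
  · obtain ⟨t, hA, hB, hC⟩ := core_sorted hz0 h2 h1 hx2; exact ⟨t, hC, hB, hA⟩


noncomputable def uvec (t : ℝ) : EuclideanSpace ℝ (Fin 2) :=
  (WithLp.equiv 2 (Fin 2 → ℝ)).symm ![Real.cos t, Real.sin t]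

lemma norm_uvec (t : ℝ) : ‖uvec t‖ = 1 := by
  rw [EuclideanSpace.norm_eq]
  have : ∀ i : Fin 2, ‖uvec t i‖ ^ 2 = uvec t i ^ 2 := fun i => sq_abs _
  rw [Fin.sum_univ_two, this 0, this 1]
  have h0 : uvec t 0 = Real.cos t := rfl
  have h1 : uvec t 1 = Real.sin t := rfl
  rw [h0, h1, Real.cos_sq_add_sin_sq, Real.sqrt_one]

lemma inner_uvec (q : EuclideanSpace ℝ (Fin 2)) :
    ∃ θ ∈ Set.Ico 0 (2*π), ∀ t, (inner ℝ (uvec t) q : ℝ) = ‖q‖ * Real.cos (t - θ) := by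
  have hpi := Real.pi_pos
  have hinner : ∀ t, (inner ℝ (uvec t) q : ℝ) = Real.cos t * q 0 + Real.sin t * q 1 := by
    intro t
    rw [PiLp.inner_apply]
    simp [uvec, Fin.sum_univ_two]
    ring
  by_cases hq : q = 0
  · exact ⟨0, ⟨le_refl 0, by linarith⟩, fun t => by simp [hq]⟩
  · set z : ℂ := ⟨q 0, q 1⟩ with hz
    have hz0 : z ≠ 0 := by
      intro h
      apply hq
      have h0 : q 0 = 0 := congrArg Complex.re h
      have h1 : q 1 = 0 := congrArg Complex.im h
      ext i
      fin_cases i <;> simpa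
    have habs : ‖z‖ = ‖q‖ := by
      rw [Complex.norm_def, Complex.normSq_apply, EuclideanSpace.norm_eq]
      simp [Fin.sum_univ_two, sq_abs]
      ring_nf
      rfl
    have habs0 : ‖z‖ ≠ 0 := by simpa using hz0
    have hnq : ‖q‖ ≠ 0 := habs ▸ habs0
    have hre : q 0 = ‖q‖ * Real.cos (Complex.arg z) := by
      rw [Complex.cos_arg hz0, habs]
      field_simp
      rfl
    have him : q 1 = ‖q‖ * Real.sin (Complex.arg z) := by
      rw [Complex.sin_arg, habs]
      field_simp
      rfl
    set a := Complex.arg z with ha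
    have ha1 : -π < a := Complex.neg_pi_lt_arg z
    have ha2 : a ≤ π := Complex.arg_le_pi z
    by_cases haa : 0 ≤ a
    · refine ⟨a, ⟨haa, by linarith⟩, fun t => ?_⟩
      rw [hinner, hre, him, Real.cos_sub]; ring
    · refine ⟨a + 2*π, ⟨by linarith, by linarith⟩, fun t => ?_⟩
      rw [show t - (a + 2*π) = t - a - 2*π by ring, Real.cos_sub_two_pi]
      rw [hinner, hre, him, Real.cos_sub]; ring

local notation "⟪" x ", " y "⟫" => @inner ℝ _ _ x y

lemma equil_facts {p : Fin 3 → EuclideanSpace ℝ (Fin 2)} (h : InscribedEquilateral p) :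
    (∀ a b, a ≠ b → ⟪p a, p b⟫ = -(1/2)) ∧ p 0 + p 1 + p 2 = 0 := by
  obtain ⟨haff, hnorm, hdd⟩ := h
  have hn : ∀ a, ‖p a‖ = 1 := fun a => by rw [← dist_zero_right]; exact hnorm a
  set c : ℝ := 1 - dist (p 0) (p 1)^2/2 with hc
  have key : ∀ a b, a ≠ b → ⟪p a, p b⟫ = c := by
    intro a b hab
    have hd := hdd a b hab
    have expand : dist (p a) (p b)^2 = ‖p a‖^2 - 2*⟪p a, p b⟫ + ‖p b‖^2 := by
      rw [dist_eq_norm, norm_sub_sq_real]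
    rw [hd, hn a, hn b] at expand
    rw [hc]; linarith
  have hcval : c = -(1/2) := by
    have hc1 : c ≠ 1 := by
      intro h1
      have : dist (p 0) (p 1) = 0 := by
        have h2 : dist (p 0) (p 1)^2 = 0 := by rw [hc] at h1; linarith
        nlinarith [dist_nonneg (x := p 0) (y := p 1)]
      exact (by decide : (0 : Fin 3) ≠ 1) (haff.injective (by rwa [dist_eq_zero] at this))
    clear_value c
    have hdep : ¬ LinearIndependent ℝ p := by
      intro hli
      have := hli.fintype_card_le_finrank
      rw [finrank_euclideanSpace_fin] at this
      simp at this
    obtain ⟨g, hg, i, hi⟩ := Fintype.not_linearIndependent_iff.mp hdep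
    have hself : ∀ a, ⟪p a, p a⟫ = 1 := by
      intro a
      rw [real_inner_self_eq_norm_sq, hn a]; norm_num
    have hax : ∀ b, g 0 * ⟪p 0, p b⟫ + g 1 * ⟪p 1, p b⟫ + g 2 * ⟪p 2, p b⟫ = 0 := by
      intro b
      have h0 : ⟪∑ a, g a • p a, p b⟫ = 0 := by rw [hg, inner_zero_left]
      rw [Fin.sum_univ_three, inner_add_left, inner_add_left, real_inner_smul_left,
        real_inner_smul_left, real_inner_smul_left] at h0
      exact h0
    have e0 : g 0 + c * g 1 + c * g 2 = 0 := by
      have := hax 0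
      rw [hself 0, key 1 0 (by decide), key 2 0 (by decide)] at this
      linarith
    have e1 : c * g 0 + g 1 + c * g 2 = 0 := by
      have := hax 1
      rw [hself 1, key 0 1 (by decide), key 2 1 (by decide)] at this
      linarith
    have e2 : c * g 0 + c * g 1 + g 2 = 0 := by
      have := hax 2
      rw [hself 2, key 0 2 (by decide), key 1 2 (by decide)] at this
      linarith
    have hg01 : g 0 = g 1 := by
      have : (1 - c) * (g 0 - g 1) = 0 := by nlinarith [e0, e1]
      rcases mul_eq_zero.mp this with h | h
      · exact absurd (by linarith) hc1
      · linarith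
    have hg02 : g 0 = g 2 := by
      have : (1 - c) * (g 0 - g 2) = 0 := by nlinarith [e0, e2]
      rcases mul_eq_zero.mp this with h | h
      · exact absurd (by linarith) hc1
      · linarith
    have hgi : g 0 ≠ 0 := by
      fin_cases i
      · exact hi
      · rw [hg01]; exact hi
      · rw [hg02]; exact hi
    have : g 0 * (1 + 2*c) = 0 := by nlinarith [e0]
    rcases mul_eq_zero.mp this with h | h
    · exact absurd h hgi
    · linarith
  have hkey : ∀ a b, a ≠ b → ⟪p a, p b⟫ = -(1/2) := fun a b hab => by
    rw [key a b hab, hcval]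
  refine ⟨hkey, ?_⟩
  have hself : ∀ a, ⟪p a, p a⟫ = 1 := by
    intro a; rw [real_inner_self_eq_norm_sq, hn a]; norm_num
  have : ⟪p 0 + p 1 + p 2, p 0 + p 1 + p 2⟫ = 0 := by
    simp only [inner_add_left, inner_add_right]
    rw [hself 0, hself 1, hself 2,
      hkey 0 1 (by decide), hkey 0 2 (by decide), hkey 1 0 (by decide),
      hkey 1 2 (by decide), hkey 2 0 (by decide), hkey 2 1 (by decide)]
    norm_num
  exact inner_self_eq_zero.mp this

lemma equil_ball {p : Fin 3 → EuclideanSpace ℝ (Fin 2)} (h : InscribedEquilateral p) :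
    closedBall (0 : EuclideanSpace ℝ (Fin 2)) (1/2) ⊆ convexHull ℝ (Set.range p) := by
  obtain ⟨hkey, hsum0⟩ := equil_facts h
  have hn : ∀ a, ‖p a‖ = 1 := fun a => by rw [← dist_zero_right]; exact h.2.1 a
  have hself : ∀ a, ⟪p a, p a⟫ = 1 := by
    intro a; rw [real_inner_self_eq_norm_sq, hn a]; norm_num
  -- p 0, p 1 are linearly independent and span
  have hli : LinearIndependent ℝ ![p 0, p 1] := by
    rw [LinearIndependent.pair_iff]
    intro s t hst
    have h0 : ⟪s • p 0 + t • p 1, p 0⟫ = 0 := by rw [hst, inner_zero_left]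
    have h1 : ⟪s • p 0 + t • p 1, p 1⟫ = 0 := by rw [hst, inner_zero_left]
    rw [inner_add_left, real_inner_smul_left, real_inner_smul_left, hself 0,
      hkey 1 0 (by decide)] at h0
    rw [inner_add_left, real_inner_smul_left, real_inner_smul_left, hself 1,
      hkey 0 1 (by decide)] at h1
    constructor <;> linarith
  have hspan : Submodule.span ℝ (Set.range ![p 0, p 1]) = ⊤ := by
    apply hli.span_eq_top_of_card_eq_finrank
    rw [finrank_euclideanSpace_fin]
    simp
  intro x hx
  rw [mem_closedBall, dist_zero_right] at hx
  obtain ⟨cf, hcf⟩ := (Submodule.mem_span_range_iff_exists_fun ℝ).mp (hspan ▸ Submodule.mem_top :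
    x ∈ Submodule.span ℝ (Set.range ![p 0, p 1]))
  rw [Fin.sum_univ_two] at hcf
  simp only [Matrix.cons_val_zero, Matrix.cons_val_one, Matrix.head_cons] at hcf
  set w : Fin 3 → ℝ := fun b => (2 * ⟪x, p b⟫ + 1)/3 with hw
  have hw0 : ∀ b ∈ Finset.univ, 0 ≤ w b := by
    intro b _
    have h1 := abs_real_inner_le_norm x (p b)
    rw [hn b, mul_one] at h1
    have h2 := abs_le.mp (h1.trans hx)
    show 0 ≤ (2 * ⟪x, p b⟫ + 1)/3
    linarith [h2.1]
  have hw1 : ∑ b, w b = 1 := by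
    have : ⟪x, p 0 + p 1 + p 2⟫ = 0 := by rw [hsum0, inner_zero_right]
    rw [inner_add_right, inner_add_right] at this
    rw [Fin.sum_univ_three, hw]
    dsimp only
    linarith
  have hib : ∀ b, ⟪x, p b⟫ = cf 0 * ⟪p 0, p b⟫ + cf 1 * ⟪p 1, p b⟫ := by
    intro b
    rw [← hcf, inner_add_left, real_inner_smul_left, real_inner_smul_left]
  have hxeq : ∑ b, w b • p b = x := by
    have h2 : p 2 = -p 0 - p 1 := by
      have hh : (p 0 + p 1) + p 2 = 0 := by rw [← hsum0]
      have := eq_neg_of_add_eq_zero_right hh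
      rw [this]; abel
    have i0 : ⟪x, p 0⟫ = cf 0 - cf 1/2 := by
      rw [hib 0, hself 0, hkey 1 0 (by decide)]; ring
    have i1 : ⟪x, p 1⟫ = cf 1 - cf 0/2 := by
      rw [hib 1, hself 1, hkey 0 1 (by decide)]; ring
    have i2 : ⟪x, p 2⟫ = -(cf 0 + cf 1)/2 := by
      rw [hib 2, hkey 0 2 (by decide), hkey 1 2 (by decide)]; ring
    rw [Fin.sum_univ_three]
    show ((2 * ⟪x, p 0⟫ + 1)/3) • p 0 + ((2 * ⟪x, p 1⟫ + 1)/3) • p 1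
      + ((2 * ⟪x, p 2⟫ + 1)/3) • p 2 = x
    rw [i0, i1, i2, h2, ← hcf]
    module
  rw [← hxeq]
  have := Finset.centerMass_mem_convexHull (Finset.univ) hw0 (by rw [hw1]; norm_num)
    (fun b _ => Set.mem_range_self b : ∀ b ∈ Finset.univ, p b ∈ Set.range p)
  rwa [Finset.centerMass_eq_of_sum_1 _ _ hw1] at this

end Helpers

open Real in
/-- with T₁, …, Tₙ (n ≥ 2) distinct inscribed equilateral triangles, S the
vertex set of ∩ᵢ Tᵢ, and P the convex hull of the vertices of the triangles scaled by
(1−ε) about the origin (ε > 0), there is no triangle T with S ⊆ T ⊆ P. -/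
theorem stmt_16 {n : ℕ} (hn : 2 ≤ n) (v : Fin n → Fin 3 → EuclideanSpace ℝ (Fin 2))
    (hins : ∀ i, InscribedEquilateral (v i))
    (hdist : ∀ i j, i ≠ j →
      convexHull ℝ (Set.range (v i)) ≠ convexHull ℝ (Set.range (v j)))
    (S : Set (EuclideanSpace ℝ (Fin 2)))
    (hS : S = Set.extremePoints ℝ (⋂ i, convexHull ℝ (Set.range (v i))))
    (ε : ℝ) (hε : 0 < ε) (hε1 : ε < 1)
    (P : Set (EuclideanSpace ℝ (Fin 2)))
    (hP : P = convexHull ℝ (⋃ i, (fun x => (1 - ε) • x) '' Set.range (v i))) :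
    ¬ ∃ q : Fin 3 → EuclideanSpace ℝ (Fin 2), AffineIndependent ℝ q ∧
        S ⊆ convexHull ℝ (Set.range q) ∧ convexHull ℝ (Set.range q) ⊆ P := by
  rintro ⟨q, hqaff, hSq, hqP⟩
  set K : Set (EuclideanSpace ℝ (Fin 2)) := ⋂ i, convexHull ℝ (Set.range (v i)) with hK
  set T : Set (EuclideanSpace ℝ (Fin 2)) := convexHull ℝ (Set.range q) with hT
  have i0 : Fin n := ⟨0, by omega⟩
  -- K contains the ball of radius 1/2
  have hball : closedBall (0 : EuclideanSpace ℝ (Fin 2)) (1/2) ⊆ K :=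
    Set.subset_iInter fun i => equil_ball (hins i)
  -- K is compact and convex
  have hKclosed : IsClosed K :=
    isClosed_iInter fun i => ((Set.finite_range (v i)).isCompact_convexHull (𝕜 := ℝ)).isClosed
  have hKcomp : IsCompact K :=
    ((Set.finite_range (v i0)).isCompact_convexHull (𝕜 := ℝ)).of_isClosed_subset hKclosed
      (Set.iInter_subset _ i0)
  have hKconv : Convex ℝ K := convex_iInter fun i => convex_convexHull ℝ _
  -- Krein-Milman: K ⊆ T
  have hKM : closure (convexHull ℝ (Set.extremePoints ℝ K)) = K :=
    closure_convexHull_extremePoints hKcomp hKconv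
  have hTclosed : IsClosed T := ((Set.finite_range q).isCompact_convexHull (𝕜 := ℝ)).isClosed
  have hKT : K ⊆ T := by
    rw [← hKM]
    have h1 : convexHull ℝ (Set.extremePoints ℝ K) ⊆ T := by
      apply convexHull_min _ (convex_convexHull ℝ _)
      rw [← hS] at *
      exact hSq
    calc closure (convexHull ℝ (Set.extremePoints ℝ K)) ⊆ closure T := closure_mono h1
      _ = T := hTclosed.closure_eq
  -- P is contained in the ball of radius 1 - ε, hence so are the vertices of T
  have hPball : P ⊆ closedBall (0 : EuclideanSpace ℝ (Fin 2)) (1 - ε) := by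
    rw [hP]
    apply convexHull_min _ (convex_closedBall _ _)
    rintro y hy
    simp only [Set.mem_iUnion, Set.mem_image, Set.mem_range] at hy
    obtain ⟨i, x, ⟨a, rfl⟩, rfl⟩ := hy
    have hna : ‖v i a‖ = 1 := by
      rw [← dist_zero_right]; exact (hins i).2.1 a
    rw [mem_closedBall, dist_zero_right, norm_smul, hna, mul_one, Real.norm_eq_abs,
      abs_of_pos (by linarith)]
  have hqnorm : ∀ a, ‖q a‖ ≤ 1 - ε := fun a => by
    have : q a ∈ T := subset_convexHull ℝ _ (Set.mem_range_self a)
    have := hPball (hqP this)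
    rwa [mem_closedBall, dist_zero_right] at this
  -- choose angles for the vertices of T
  obtain ⟨θ0, hθ0, he0⟩ := inner_uvec (q 0)
  obtain ⟨θ1, hθ1, he1⟩ := inner_uvec (q 1)
  obtain ⟨θ2, hθ2, he2⟩ := inner_uvec (q 2)
  obtain ⟨t, hc0, hc1, hc2⟩ := core_three θ0 θ1 θ2 hθ0 hθ1 hθ2
  set u : EuclideanSpace ℝ (Fin 2) := uvec t with hu
  -- every vertex of T satisfies ⟪u, q a⟫ ≤ (1 - ε)/2
  have hvert : ∀ a : Fin 3, (inner ℝ u (q a) : ℝ) ≤ (1 - ε)/2 := by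
    intro a
    have key : ∀ (b : Fin 3), (inner ℝ u (q b) : ℝ) = ‖q b‖ * Real.cos (t - (![θ0, θ1, θ2]) b) := by
      intro b
      fin_cases b
      · exact he0 t
      · exact he1 t
      · exact he2 t
    have hcos : Real.cos (t - (![θ0, θ1, θ2]) a) ≤ 1/2 := by
      fin_cases a <;> assumption
    have hq0 : (0:ℝ) ≤ ‖q a‖ := norm_nonneg _
    have hqa := hqnorm a
    calc (inner ℝ u (q a) : ℝ) = ‖q a‖ * Real.cos (t - (![θ0, θ1, θ2]) a) := key a
      _ ≤ ‖q a‖ * (1/2) := mul_le_mul_of_nonneg_left hcos hq0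
      _ ≤ (1 - ε)/2 := by nlinarith
  -- hence all of T satisfies it
  have hhalf : T ⊆ {y | (inner ℝ u y : ℝ) ≤ (1 - ε)/2} := by
    apply convexHull_min _ (convex_halfSpace_le
      ⟨fun a b => inner_add_right u a b, fun c y => real_inner_smul_right u y c⟩ ((1 - ε)/2))
    rintro y ⟨a, rfl⟩
    exact hvert a
  -- but (1/2) • u lies in K ⊆ T and violates the inequality
  have hx : ((1:ℝ)/2) • u ∈ K := by
    apply hball
    rw [mem_closedBall, dist_zero_right, norm_smul, norm_uvec, mul_one, Real.norm_eq_abs]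
    rw [abs_of_pos]
    · norm_num
  have hxT := hhalf (hKT hx)
  have : (inner ℝ u (((1:ℝ)/2) • u) : ℝ) = 1/2 := by
    rw [real_inner_smul_right, real_inner_self_eq_norm_sq, norm_uvec]
    norm_num
  rw [Set.mem_setOf_eq, this] at hxT
  linarith
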